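/- Let (G,σ) be a d-regular finite signed graph with the counting measure π ≡ 1 as vertex measure. Then (1/(2d))·h_out^σ ≤ h^σ ≤ h_out^σ, where h^σ is the signed Cheeger constant and h_out^σ is the signed outer vertex isoperimetric constant. -/

import Mathlib

set_option linter.unusedSectionVars false

attribute [local instance] Classical.propDecidable


/-- The outer vertex boundary of a finite set `U`: vertices outside `U` with a neighbor in `U`. -/
noncomputable def outBd {V : Type*} [Fintype V] (Adj : V → V → Prop) (U : Finset V) : Finset V :=
  Finset.univ.filter fun y => y ∉ U ∧ ∃ x ∈ U, Adj x y

/-- The edge boundary size of `U`: the number of edges with one endpoint in `U` and the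
other outside `U`. -/
noncomputable def edgeBd {V : Type*} [Fintype V] (Adj : V → V → Prop) (U : Finset V) : ℕ :=
  ((U ×ˢ Uᶜ).filter fun p => Adj p.1 p.2).card

/-- The volume of `U`: the sum of vertex degrees over `U`. -/
noncomputable def vol {V : Type*} [Fintype V] (Adj : V → V → Prop) (U : Finset V) : ℕ :=
  ∑ x ∈ U, (Finset.univ.filter fun y => Adj x y).card

/-- The edge frustration index `ι^σ(U)` of a subset `U` of a signed graph. -/
noncomputable def iotaEdge {V : Type*} [Fintype V] (Adj : V → V → Prop) (σ : V → V → ℝ)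
    (U : Finset V) : ℝ :=
  sInf {r : ℝ | ∃ τ : V → ℝ, (∀ x : V, τ x = 1 ∨ τ x = -1) ∧
    r = (1 / 2) * ∑ x ∈ U, ∑ y ∈ U.filter (fun y => Adj x y), |τ x - σ x y * τ y|}

/-- The signed Cheeger constant `h^σ`. -/
noncomputable def hSigned {V : Type*} [Fintype V] (Adj : V → V → Prop) (σ : V → V → ℝ) : ℝ :=
  sInf {r : ℝ | ∃ U : Finset V, U.Nonempty ∧
    r = (iotaEdge Adj σ U + (edgeBd Adj U : ℝ)) / (vol Adj U : ℝ)}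

/-- The `∞`-frustration index `ι_∞^σ(U)` of a subset `U` of a signed graph
(with the counting measure). -/
noncomputable def iotaInf {V : Type*} [Fintype V] (Adj : V → V → Prop) (σ : V → V → ℝ)
    (U : Finset V) : ℝ :=
  sInf {r : ℝ | ∃ τ : V → ℝ, (∀ x : V, τ x = 1 ∨ τ x = -1) ∧
    r = (1 / 2) * ∑ x ∈ U, ⨆ y ∈ {y : V | y ∈ U ∧ Adj x y}, |τ x - σ x y * τ y|}

/-- The signed outer vertex isoperimetric constant `h_out^σ` (with the counting measure). -/
noncomputable def hOutSigned {V : Type*} [Fintype V] (Adj : V → V → Prop) (σ : V → V → ℝ) : ℝ :=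
  sInf {r : ℝ | ∃ U : Finset V, U.Nonempty ∧
    r = (2 * iotaInf Adj σ U + ((outBd Adj U).card : ℝ)) / (U.card : ℝ)}


section Aux
variable {V : Type*} [Fintype V] (Adj : V → V → Prop) (σ : V → V → ℝ)

noncomputable def valE (U : Finset V) (τ : V → ℝ) : ℝ :=
  (1 / 2) * ∑ x ∈ U, ∑ y ∈ U.filter (fun y => Adj x y), |τ x - σ x y * τ y|

noncomputable def valI (U : Finset V) (τ : V → ℝ) : ℝ :=
  (1 / 2) * ∑ x ∈ U, ⨆ y ∈ {y : V | y ∈ U ∧ Adj x y}, |τ x - σ x y * τ y|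

lemma valE_nonneg (U : Finset V) (τ : V → ℝ) : 0 ≤ valE Adj σ U τ :=
  mul_nonneg (by norm_num)
    (Finset.sum_nonneg fun x _ => Finset.sum_nonneg fun y _ => abs_nonneg _)

lemma valI_nonneg (U : Finset V) (τ : V → ℝ) : 0 ≤ valI Adj σ U τ :=
  mul_nonneg (by norm_num)
    (Finset.sum_nonneg fun x _ =>
      Real.iSup_nonneg fun y => Real.iSup_nonneg fun _ => abs_nonneg _)

lemma valI_le_valE (U : Finset V) (τ : V → ℝ) : valI Adj σ U τ ≤ valE Adj σ U τ := by
  refine mul_le_mul_of_nonneg_left ?_ (by norm_num)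
  apply Finset.sum_le_sum
  intro x _
  have hsum0 : (0:ℝ) ≤ ∑ y ∈ U.filter (fun y => Adj x y), |τ x - σ x y * τ y| :=
    Finset.sum_nonneg fun y _ => abs_nonneg _
  show (⨆ y ∈ {y : V | y ∈ U ∧ Adj x y}, |τ x - σ x y * τ y|)
      ≤ ∑ y ∈ U.filter (fun y => Adj x y), |τ x - σ x y * τ y|
  refine Real.iSup_le (fun y => Real.iSup_le (fun hy => ?_) hsum0) hsum0
  exact Finset.single_le_sum (f := fun y => |τ x - σ x y * τ y|) (fun i _ => abs_nonneg _) (Finset.mem_filter.2 ⟨hy.1, hy.2⟩)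

lemma valE_le_d_valI (U : Finset V) (τ : V → ℝ) (d : ℕ)
    (hreg : ∀ x : V, (Finset.univ.filter fun y => Adj x y).card = d) :
    valE Adj σ U τ ≤ (d : ℝ) * valI Adj σ U τ := by
  have key : ∀ x ∈ U, ∑ y ∈ U.filter (fun y => Adj x y), |τ x - σ x y * τ y|
      ≤ (d:ℝ) * (⨆ y ∈ {y : V | y ∈ U ∧ Adj x y}, |τ x - σ x y * τ y|) := by
    intro x _
    have hS0 : (0:ℝ) ≤ ⨆ y ∈ {y : V | y ∈ U ∧ Adj x y}, |τ x - σ x y * τ y| :=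
      Real.iSup_nonneg fun y => Real.iSup_nonneg fun _ => abs_nonneg _
    have hle : ∀ y ∈ U.filter (fun y => Adj x y),
        |τ x - σ x y * τ y| ≤ ⨆ y ∈ {y : V | y ∈ U ∧ Adj x y}, |τ x - σ x y * τ y| := by
      intro y hy
      rw [Finset.mem_filter] at hy
      have hb : BddAbove (Set.range fun y =>
          ⨆ (_ : y ∈ {y : V | y ∈ U ∧ Adj x y}), |τ x - σ x y * τ y|) :=
        Set.Finite.bddAbove (Set.finite_range _)
      have h1 := le_ciSup hb y
      rwa [ciSup_pos (show y ∈ {y : V | y ∈ U ∧ Adj x y} from ⟨hy.1, hy.2⟩)] at h1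
    calc ∑ y ∈ U.filter (fun y => Adj x y), |τ x - σ x y * τ y|
        ≤ ∑ _y ∈ U.filter (fun y => Adj x y),
            (⨆ y ∈ {y : V | y ∈ U ∧ Adj x y}, |τ x - σ x y * τ y|) :=
          Finset.sum_le_sum hle
      _ = ((U.filter (fun y => Adj x y)).card : ℝ) *
            (⨆ y ∈ {y : V | y ∈ U ∧ Adj x y}, |τ x - σ x y * τ y|) := by
          rw [Finset.sum_const, nsmul_eq_mul]
      _ ≤ (d:ℝ) * (⨆ y ∈ {y : V | y ∈ U ∧ Adj x y}, |τ x - σ x y * τ y|) := by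
          apply mul_le_mul_of_nonneg_right _ hS0
          have h2 : (U.filter (fun y => Adj x y)).card ≤ d := by
            rw [← hreg x]
            exact Finset.card_le_card (Finset.filter_subset_filter _ (Finset.subset_univ U))
          exact_mod_cast h2
  have key2 := Finset.sum_le_sum key
  rw [← Finset.mul_sum] at key2
  have h3 : valE Adj σ U τ ≤ (1/2 : ℝ) *
      ((d:ℝ) * ∑ x ∈ U, ⨆ y ∈ {y : V | y ∈ U ∧ Adj x y}, |τ x - σ x y * τ y|) := by
    unfold valE; linarith
  calc valE Adj σ U τ ≤ _ := h3
    _ = (d:ℝ) * valI Adj σ U τ := by unfold valI; ring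

lemma iotaEdge_eq (U : Finset V) :
    iotaEdge Adj σ U = sInf {r : ℝ | ∃ τ : V → ℝ,
      (∀ x : V, τ x = 1 ∨ τ x = -1) ∧ r = valE Adj σ U τ} := rfl

lemma iotaInf_eq (U : Finset V) :
    iotaInf Adj σ U = sInf {r : ℝ | ∃ τ : V → ℝ,
      (∀ x : V, τ x = 1 ∨ τ x = -1) ∧ r = valI Adj σ U τ} := rfl

lemma setE_nonempty (U : Finset V) :
    {r : ℝ | ∃ τ : V → ℝ, (∀ x : V, τ x = 1 ∨ τ x = -1) ∧ r = valE Adj σ U τ}.Nonempty :=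
  ⟨valE Adj σ U (fun _ => 1), fun _ => 1, fun _ => Or.inl rfl, rfl⟩

lemma setI_nonempty (U : Finset V) :
    {r : ℝ | ∃ τ : V → ℝ, (∀ x : V, τ x = 1 ∨ τ x = -1) ∧ r = valI Adj σ U τ}.Nonempty :=
  ⟨valI Adj σ U (fun _ => 1), fun _ => 1, fun _ => Or.inl rfl, rfl⟩

lemma setE_bddBelow (U : Finset V) :
    BddBelow {r : ℝ | ∃ τ : V → ℝ, (∀ x : V, τ x = 1 ∨ τ x = -1) ∧ r = valE Adj σ U τ} :=
  ⟨0, fun r hr => by obtain ⟨τ, _, rfl⟩ := hr; exact valE_nonneg Adj σ U τ⟩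

lemma setI_bddBelow (U : Finset V) :
    BddBelow {r : ℝ | ∃ τ : V → ℝ, (∀ x : V, τ x = 1 ∨ τ x = -1) ∧ r = valI Adj σ U τ} :=
  ⟨0, fun r hr => by obtain ⟨τ, _, rfl⟩ := hr; exact valI_nonneg Adj σ U τ⟩

lemma iotaEdge_nonneg (U : Finset V) : 0 ≤ iotaEdge Adj σ U := by
  rw [iotaEdge_eq]
  exact Real.sInf_nonneg fun r hr => by obtain ⟨τ, _, rfl⟩ := hr; exact valE_nonneg Adj σ U τ

lemma iotaInf_nonneg (U : Finset V) : 0 ≤ iotaInf Adj σ U := by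
  rw [iotaInf_eq]
  exact Real.sInf_nonneg fun r hr => by obtain ⟨τ, _, rfl⟩ := hr; exact valI_nonneg Adj σ U τ

lemma iotaEdge_le_valE (U : Finset V) (τ : V → ℝ) (hτ : ∀ x : V, τ x = 1 ∨ τ x = -1) :
    iotaEdge Adj σ U ≤ valE Adj σ U τ := by
  rw [iotaEdge_eq]
  exact csInf_le (setE_bddBelow Adj σ U) ⟨τ, hτ, rfl⟩

lemma iotaInf_le_valI (U : Finset V) (τ : V → ℝ) (hτ : ∀ x : V, τ x = 1 ∨ τ x = -1) :
    iotaInf Adj σ U ≤ valI Adj σ U τ := by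
  rw [iotaInf_eq]
  exact csInf_le (setI_bddBelow Adj σ U) ⟨τ, hτ, rfl⟩

lemma iotaInf_le_iotaEdge (U : Finset V) : iotaInf Adj σ U ≤ iotaEdge Adj σ U := by
  rw [iotaEdge_eq]
  refine le_csInf (setE_nonempty Adj σ U) ?_
  rintro r ⟨τ, hτ, rfl⟩
  exact (iotaInf_le_valI Adj σ U τ hτ).trans (valI_le_valE Adj σ U τ)

lemma iotaEdge_le_d_iotaInf (U : Finset V) (d : ℕ) (hd : 0 < d)
    (hreg : ∀ x : V, (Finset.univ.filter fun y => Adj x y).card = d) :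
    iotaEdge Adj σ U ≤ (d : ℝ) * iotaInf Adj σ U := by
  have hd' : (0:ℝ) < d := by exact_mod_cast hd
  have h1 : iotaEdge Adj σ U / d ≤ iotaInf Adj σ U := by
    rw [iotaInf_eq]
    refine le_csInf (setI_nonempty Adj σ U) ?_
    rintro r ⟨τ, hτ, rfl⟩
    rw [div_le_iff₀ hd']
    calc iotaEdge Adj σ U ≤ valE Adj σ U τ := iotaEdge_le_valE Adj σ U τ hτ
      _ ≤ d * valI Adj σ U τ := valE_le_d_valI Adj σ U τ d hreg
      _ = valI Adj σ U τ * d := mul_comm _ _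
  calc iotaEdge Adj σ U = (iotaEdge Adj σ U / d) * d := by field_simp
    _ ≤ iotaInf Adj σ U * d := mul_le_mul_of_nonneg_right h1 hd'.le
    _ = (d:ℝ) * iotaInf Adj σ U := mul_comm _ _

lemma outBd_card_le_edgeBd (U : Finset V) : (outBd Adj U).card ≤ edgeBd Adj U := by
  classical
  unfold outBd edgeBd
  apply Finset.card_le_card_of_injOn
    (fun y => (if h : ∃ x ∈ U, Adj x y then h.choose else y, y))
  · intro y hy
    rw [Finset.mem_coe, Finset.mem_filter] at hy
    obtain ⟨-, hyU, hex⟩ := hy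
    simp only [Finset.mem_coe]
    rw [dif_pos hex]
    refine Finset.mem_filter.2 ⟨Finset.mem_product.2 ⟨hex.choose_spec.1, ?_⟩,
      hex.choose_spec.2⟩
    exact Finset.mem_compl.2 hyU
  · intro a _ b _ hab
    exact congrArg Prod.snd hab

lemma edgeBd_le_d_outBd (U : Finset V) (d : ℕ)
    (hsymm : ∀ x y : V, Adj x y → Adj y x)
    (hreg : ∀ x : V, (Finset.univ.filter fun y => Adj x y).card = d) :
    edgeBd Adj U ≤ d * (outBd Adj U).card := by
  classical
  unfold edgeBd
  apply Finset.card_le_mul_card_image_of_maps_to (f := Prod.snd) (t := outBd Adj U)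
  · intro p hp
    rw [Finset.mem_filter, Finset.mem_product] at hp
    obtain ⟨⟨h1, h2⟩, h3⟩ := hp
    exact Finset.mem_filter.2 ⟨Finset.mem_univ _, Finset.mem_compl.1 h2, p.1, h1, h3⟩
  · intro b _
    have : ((((U ×ˢ Uᶜ).filter fun p => Adj p.1 p.2).filter fun p => p.2 = b).card
        ≤ (Finset.univ.filter fun y => Adj b y).card) := by
      apply Finset.card_le_card_of_injOn (fun p => p.1)
      · intro p hp
        simp only [Finset.mem_coe, Finset.mem_filter, Finset.mem_product] at hp
        exact Finset.mem_filter.2 ⟨Finset.mem_univ _, hsymm _ _ (hp.2 ▸ hp.1.2)⟩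
      · intro p hp q hq hpq
        simp only [Finset.coe_filter, Set.mem_setOf_eq] at hp hq
        exact Prod.ext hpq (hp.2.trans hq.2.symm)
    calc _ ≤ (Finset.univ.filter fun y => Adj b y).card := this
      _ = d := hreg b

lemma vol_eq (U : Finset V) (d : ℕ)
    (hreg : ∀ x : V, (Finset.univ.filter fun y => Adj x y).card = d) :
    vol Adj U = U.card * d := by
  unfold vol
  rw [Finset.sum_congr rfl fun x _ => hreg x, Finset.sum_const, smul_eq_mul]

end Aux
/-- For a `d`-regular finite signed graph with the counting measure,
`(1/(2d)) h_out^σ ≤ h^σ ≤ h_out^σ`. -/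
theorem hSigned_between_hOutSigned {V : Type*} [Fintype V] (Adj : V → V → Prop)
    (σ : V → V → ℝ) (d : ℕ)
    (hsymm : ∀ x y : V, Adj x y → Adj y x)
    (hσsymm : ∀ x y : V, σ x y = σ y x)
    (hσsign : ∀ x y : V, Adj x y → σ x y = 1 ∨ σ x y = -1)
    (hreg : ∀ x : V, (Finset.univ.filter fun y => Adj x y).card = d) :
    (1 / (2 * (d : ℝ))) * hOutSigned Adj σ ≤ hSigned Adj σ ∧
    hSigned Adj σ ≤ hOutSigned Adj σ := by
  have hHnn : 0 ≤ hSigned Adj σ := by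
    apply Real.sInf_nonneg
    rintro r ⟨U, hU, rfl⟩
    exact div_nonneg (add_nonneg (iotaEdge_nonneg Adj σ U) (Nat.cast_nonneg _))
      (Nat.cast_nonneg _)
  have hOnn : 0 ≤ hOutSigned Adj σ := by
    apply Real.sInf_nonneg
    rintro r ⟨U, hU, rfl⟩
    refine div_nonneg (add_nonneg ?_ (Nat.cast_nonneg _)) (Nat.cast_nonneg _)
    have := iotaInf_nonneg Adj σ U; linarith
  have bddH : BddBelow {r : ℝ | ∃ U : Finset V, U.Nonempty ∧
      r = (iotaEdge Adj σ U + (edgeBd Adj U : ℝ)) / (vol Adj U : ℝ)} := by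
    refine ⟨0, ?_⟩
    rintro r ⟨U, hU, rfl⟩
    exact div_nonneg (add_nonneg (iotaEdge_nonneg Adj σ U) (Nat.cast_nonneg _))
      (Nat.cast_nonneg _)
  have bddO : BddBelow {r : ℝ | ∃ U : Finset V, U.Nonempty ∧
      r = (2 * iotaInf Adj σ U + ((outBd Adj U).card : ℝ)) / (U.card : ℝ)} := by
    refine ⟨0, ?_⟩
    rintro r ⟨U, hU, rfl⟩
    refine div_nonneg (add_nonneg ?_ (Nat.cast_nonneg _)) (Nat.cast_nonneg _)
    have := iotaInf_nonneg Adj σ U; linarith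
  rcases isEmpty_or_nonempty V with hV | hV
  · have h1 : {r : ℝ | ∃ U : Finset V, U.Nonempty ∧
        r = (iotaEdge Adj σ U + (edgeBd Adj U : ℝ)) / (vol Adj U : ℝ)} = ∅ := by
      ext r
      simp only [Set.mem_setOf_eq, Set.mem_empty_iff_false, iff_false, not_exists]
      rintro U ⟨⟨x, -⟩, -⟩
      exact hV.false x
    have h2 : {r : ℝ | ∃ U : Finset V, U.Nonempty ∧
        r = (2 * iotaInf Adj σ U + ((outBd Adj U).card : ℝ)) / (U.card : ℝ)} = ∅ := by
      ext r
      simp only [Set.mem_setOf_eq, Set.mem_empty_iff_false, iff_false, not_exists]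
      rintro U ⟨⟨x, -⟩, -⟩
      exact hV.false x
    have e1 : hSigned Adj σ = 0 := by unfold hSigned; rw [h1, Real.sInf_empty]
    have e2 : hOutSigned Adj σ = 0 := by unfold hOutSigned; rw [h2, Real.sInf_empty]
    rw [e1, e2]
    norm_num
  · obtain ⟨v⟩ := hV
    have main2 : ∀ U : Finset V, U.Nonempty →
        (iotaEdge Adj σ U + (edgeBd Adj U : ℝ)) / (vol Adj U : ℝ)
          ≤ (2 * iotaInf Adj σ U + ((outBd Adj U).card : ℝ)) / (U.card : ℝ) := by
      intro U hU
      have hcard : (0:ℝ) < U.card := by exact_mod_cast hU.card_pos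
      have hvol : ((vol Adj U : ℕ) : ℝ) = (U.card : ℝ) * d := by
        rw [vol_eq Adj U d hreg]; push_cast; ring
      rcases Nat.eq_zero_or_pos d with hd | hd
      · subst hd
        have hAdj : ∀ x y : V, ¬ Adj x y := by
          intro x y hxy
          have h0 := hreg x
          rw [Finset.card_eq_zero] at h0
          have hmem : y ∈ Finset.univ.filter fun y => Adj x y :=
            Finset.mem_filter.2 ⟨Finset.mem_univ _, hxy⟩
          rw [h0] at hmem
          exact absurd hmem (Finset.notMem_empty _)
        have he : edgeBd Adj U = 0 := by
          unfold edgeBd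
          rw [Finset.card_eq_zero, Finset.filter_eq_empty_iff]
          exact fun p _ => hAdj _ _
        have hι : iotaEdge Adj σ U = 0 := by
          refine le_antisymm ?_ (iotaEdge_nonneg Adj σ U)
          have h1 := iotaEdge_le_valE Adj σ U (fun _ => 1) (fun _ => Or.inl rfl)
          have h2 : valE Adj σ U (fun _ => 1) = 0 := by
            unfold valE
            rw [Finset.sum_eq_zero, mul_zero]
            intro x _
            rw [Finset.filter_eq_empty_iff.2 fun y _ => hAdj x y, Finset.sum_empty]
          linarith
        rw [hι, he, hvol]
        norm_num
        refine div_nonneg (add_nonneg ?_ (Nat.cast_nonneg _)) (Nat.cast_nonneg _)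
        have := iotaInf_nonneg Adj σ U; linarith
      · have hd' : (0:ℝ) < d := by exact_mod_cast hd
        have h1 := iotaEdge_le_d_iotaInf Adj σ U d hd hreg
        have h2 : (edgeBd Adj U : ℝ) ≤ (d:ℝ) * ((outBd Adj U).card : ℝ) := by
          exact_mod_cast edgeBd_le_d_outBd Adj U d hsymm hreg
        have h3 := iotaInf_nonneg Adj σ U
        rw [hvol, div_le_div_iff₀ (by positivity) hcard]
        have hnum : iotaEdge Adj σ U + (edgeBd Adj U : ℝ)
            ≤ (d:ℝ) * (2 * iotaInf Adj σ U + ((outBd Adj U).card : ℝ)) := by nlinarith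
        calc (iotaEdge Adj σ U + (edgeBd Adj U : ℝ)) * (U.card:ℝ)
            ≤ ((d:ℝ) * (2 * iotaInf Adj σ U + ((outBd Adj U).card:ℝ))) * (U.card:ℝ) :=
              mul_le_mul_of_nonneg_right hnum hcard.le
          _ = (2 * iotaInf Adj σ U + ((outBd Adj U).card:ℝ)) * ((U.card:ℝ) * d) := by ring
    constructor
    · rcases Nat.eq_zero_or_pos d with hd | hd
      · subst hd
        norm_num
        exact hHnn
      · have hd' : (0:ℝ) < d := by exact_mod_cast hd
        refine le_csInf ⟨_, ⟨{v}, Finset.singleton_nonempty v, rfl⟩⟩ ?_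
        rintro r ⟨U, hU, rfl⟩
        have hcard : (0:ℝ) < U.card := by exact_mod_cast hU.card_pos
        have hvol : ((vol Adj U : ℕ) : ℝ) = (U.card : ℝ) * d := by
          rw [vol_eq Adj U d hreg]; push_cast; ring
        have hOle : hOutSigned Adj σ
            ≤ (2 * iotaInf Adj σ U + ((outBd Adj U).card:ℝ)) / (U.card:ℝ) :=
          csInf_le bddO ⟨U, hU, rfl⟩
        have h4 := iotaInf_le_iotaEdge Adj σ U
        have h5 : ((outBd Adj U).card : ℝ) ≤ (edgeBd Adj U : ℝ) := by
          exact_mod_cast outBd_card_le_edgeBd Adj U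
        have he0 : (0:ℝ) ≤ (edgeBd Adj U : ℝ) := Nat.cast_nonneg _
        calc (1/(2*(d:ℝ))) * hOutSigned Adj σ
            ≤ (1/(2*(d:ℝ))) * ((2 * iotaInf Adj σ U + ((outBd Adj U).card:ℝ)) / (U.card:ℝ)) :=
              mul_le_mul_of_nonneg_left hOle (by positivity)
          _ = (2 * iotaInf Adj σ U + ((outBd Adj U).card:ℝ)) / (2*(d:ℝ)*(U.card:ℝ)) := by
              rw [div_mul_div_comm, one_mul]
          _ ≤ (iotaEdge Adj σ U + (edgeBd Adj U : ℝ)) / ((vol Adj U : ℕ) : ℝ) := by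
              rw [hvol, div_le_div_iff₀ (by positivity) (by positivity)]
              nlinarith [mul_le_mul_of_nonneg_right
                (show 2 * iotaInf Adj σ U + ((outBd Adj U).card:ℝ)
                    ≤ 2 * (iotaEdge Adj σ U + (edgeBd Adj U : ℝ)) by linarith)
                (show (0:ℝ) ≤ (U.card:ℝ) * d by positivity)]
    · refine le_csInf ⟨_, ⟨{v}, Finset.singleton_nonempty v, rfl⟩⟩ ?_
      rintro r ⟨U, hU, rfl⟩
      exact (csInf_le bddH ⟨U, hU, rfl⟩).trans (main2 U hU)
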